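/- Let J ⊂ k[x_1,...,x_s] be a monomial ideal with minimal generating lattice set E ⊂ ℕ^s, and let Ĵ be the monomial ideal generated by the monomials obtained from generators of J by setting x_s = 1. Define F as the set of vectors a = max(v_1,...,v_s) - (1,...,1) where v_1,...,v_s ∈ E satisfy: the j-th coordinate of v_j exceeds the j-th coordinate of v_h for all h ≠ j, and a ≱ v for all v ∈ E. Assume Ĵ/J has finite length. Then sup{ r : (Ĵ/J)_r ≠ 0 } = -∞ if F = ∅, and equals max_{a ∈ F} |a| otherwise, where |a| is the sum of coordinates of a. -/

import Mathlib

open MvPolynomial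

noncomputable section

/-- Coercion of a natural number into `WithBot ℕ∞` (degrees, with `⊥ = -∞`, `⊤ = ∞`). -/
def natW (r : ℕ) : WithBot ℕ∞ := ((r : ℕ∞) : WithBot ℕ∞)

/-- The total degree `|a|` of an exponent vector. -/
def degOf {n : ℕ} (a : Fin n →₀ ℕ) : ℕ := a.sum fun _ e => e

variable {k : Type*} [Field k] {n : ℕ}

/-- The top degree in which the graded pieces of two ideals differ
(`⊥` if they never differ, `⊤` if they differ in unboundedly many degrees). -/
def topDiff (I J : Ideal (MvPolynomial (Fin n) k)) : WithBot ℕ∞ :=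
  sSup {x | ∃ r : ℕ, x = natW r ∧
    ¬ ∀ f : MvPolynomial (Fin n) k, f.IsHomogeneous r → (f ∈ I ↔ f ∈ J)}

/-- `I` is a homogeneous (graded) ideal. -/
def HomogIdeal (I : Ideal (MvPolynomial (Fin n) k)) : Prop :=
  ∀ f ∈ I, ∀ r : ℕ, homogeneousComponent r f ∈ I

/-- The maximal homogeneous ideal `𝔪 = (x₁, …, xₙ)`. -/
def maxIdl (k : Type*) [Field k] (n : ℕ) : Ideal (MvPolynomial (Fin n) k) :=
  Ideal.span (Set.range X)

/-- The ideal `(I, z₁, …, z_i)`. -/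
def partIdeal (I : Ideal (MvPolynomial (Fin n) k)) {m : ℕ}
    (z : Fin m → MvPolynomial (Fin n) k) (i : ℕ) : Ideal (MvPolynomial (Fin n) k) :=
  I ⊔ Ideal.span (z '' {j : Fin m | (j : ℕ) < i})

/-- `a_z^i(S/I) = sup { r : [(I,z₁,…,z_i) : z_{i+1}]_r ≠ (I,z₁,…,z_i)_r }`. -/
def aInv (I : Ideal (MvPolynomial (Fin n) k)) {m : ℕ}
    (z : Fin m → MvPolynomial (Fin n) k) (i : Fin m) : WithBot ℕ∞ :=
  topDiff ((partIdeal I z (i : ℕ)).colon (Ideal.span {z i})) (partIdeal I z (i : ℕ))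

/-- `z` is a filter-regular sequence for `S/I`: each `z_{i+1}` avoids every associated
prime of `(I,z₁,…,z_i)` other than the maximal homogeneous ideal. -/
def FilterRegular (I : Ideal (MvPolynomial (Fin n) k)) {m : ℕ}
    (z : Fin m → MvPolynomial (Fin n) k) : Prop :=
  ∀ i : Fin m, ∀ p : Ideal (MvPolynomial (Fin n) k),
    IsAssociatedPrime p (MvPolynomial (Fin n) k ⧸ partIdeal I z (i : ℕ)) →
    p ≠ maxIdl k n → z i ∉ p

/-- The saturation `⋃_{m ≥ 1} (J : z^m)`. -/
def satIdeal (J : Ideal (MvPolynomial (Fin n) k)) (z : MvPolynomial (Fin n) k) :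
    Ideal (MvPolynomial (Fin n) k) :=
  ⨆ m : ℕ, J.colon (Ideal.span {z ^ (m + 1)})

/-- `a <_drevlex b` for the degree reverse lexicographic order with `x₁ > x₂ > … > xₙ`. -/
def RevLexLT {n : ℕ} (a b : Fin n →₀ ℕ) : Prop :=
  degOf a < degOf b ∨
    (degOf a = degOf b ∧ ∃ j : Fin n, b j < a j ∧ ∀ l : Fin n, j < l → a l = b l)

/-- The initial ideal of `I` with respect to the reverse lexicographic order:
the ideal generated by the leading monomials of the nonzero elements of `I`. -/
def initialIdeal (I : Ideal (MvPolynomial (Fin n) k)) : Ideal (MvPolynomial (Fin n) k) :=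
  Ideal.span {g | ∃ f ∈ I, f ≠ 0 ∧ ∃ μ ∈ f.support,
    (∀ ν ∈ f.support, ν = μ ∨ RevLexLT ν μ) ∧ g = monomial μ (1 : k)}

/-- The evaluation `x_{n-i+1} = ⋯ = x_n = 0`. -/
def evalZero (k : Type*) [Field k] (n i : ℕ) :
    MvPolynomial (Fin n) k →ₐ[k] MvPolynomial (Fin n) k :=
  aeval fun j : Fin n => if (j : ℕ) < n - i then X j else 0

/-- The evaluation `x_{n-i+1} = ⋯ = x_n = 0`, `x_{n-i} = 1`. -/
def evalOne (k : Type*) [Field k] (n i : ℕ) :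
    MvPolynomial (Fin n) k →ₐ[k] MvPolynomial (Fin n) k :=
  aeval fun j : Fin n =>
    if (j : ℕ) < n - i - 1 then X j else if (j : ℕ) = n - i - 1 then 1 else 0

/-- `J_i`: the ideal obtained from `In(I)` by evaluating `x_{n-i+1} = ⋯ = x_n = 0`. -/
def Jlow (i : ℕ) (I : Ideal (MvPolynomial (Fin n) k)) : Ideal (MvPolynomial (Fin n) k) :=
  Ideal.map (evalZero k n i) (initialIdeal I)

/-- `J̃_i`: the ideal obtained from `J_i` by the further evaluation `x_{n-i} = 1`. -/
def Jtil (i : ℕ) (I : Ideal (MvPolynomial (Fin n) k)) : Ideal (MvPolynomial (Fin n) k) :=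
  Ideal.map (evalOne k n i) (initialIdeal I)

/-- `c_i(I) = sup { r : (J̃_i/J_i)_r ≠ 0 }`, computed in `S_i = k[x₁,…,x_{n-i}]`. -/
def cInv (i : ℕ) (I : Ideal (MvPolynomial (Fin n) k)) : WithBot ℕ∞ :=
  sSup {x | ∃ r : ℕ, x = natW r ∧ ∃ f : MvPolynomial (Fin n) k,
    f ∈ Jtil i I ∧ f ∈ supported k {j : Fin n | (j : ℕ) < n - i} ∧
    f.IsHomogeneous r ∧ f ∉ Jlow i I}

/-- `r(I) = sup { r : (S_d/J_d)_r ≠ 0 }`. -/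
def rInv (d : ℕ) (I : Ideal (MvPolynomial (Fin n) k)) : WithBot ℕ∞ :=
  sSup {x | ∃ r : ℕ, x = natW r ∧ ∃ f : MvPolynomial (Fin n) k,
    f ∈ supported k {j : Fin n | (j : ℕ) < n - d} ∧ f.IsHomogeneous r ∧ f ∉ Jlow d I}

/-- The partial regularity `reg_t(S/I)`, via its characterization
`reg_t(S/I) = max_i a_z^i(S/I)` for any filter-regular sequence `z` of `t+1` linear forms
([T1, Proposition 2.2]; equal to `max { aᵢ(S/I) + i : i ≤ t }` in terms of local cohomology). -/
def regT (t : ℕ) (I : Ideal (MvPolynomial (Fin n) k)) : WithBot ℕ∞ :=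
  sSup {x | ∃ z : Fin (t + 1) → MvPolynomial (Fin n) k,
    (∀ j, (z j).IsHomogeneous 1) ∧ FilterRegular I z ∧
    x = ⨆ i : Fin (t + 1), aInv I z i}

/-- The Castelnuovo–Mumford regularity `reg(S/I)`, via its characterization
`reg(S/I) = max { a_z^0, …, a_z^{d-1}, r_z(S/I) }` for any filter-regular sequence `z`
of `d = dim S/I` linear forms ([BS, Theorem 1.10], [T1, Corollary 3.3]). -/
def regCM (I : Ideal (MvPolynomial (Fin n) k)) : WithBot ℕ∞ :=
  sSup {x | ∃ d : ℕ, ringKrullDim (MvPolynomial (Fin n) k ⧸ I) = natW d ∧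
    ∃ z : Fin d → MvPolynomial (Fin n) k,
      (∀ j, (z j).IsHomogeneous 1) ∧ FilterRegular I z ∧
      x = (⨆ i : Fin d, aInv I z i) ⊔ topDiff ⊤ (I ⊔ Ideal.span (Set.range z))}

/-- The exponent vectors of the minimal monomial generators of a monomial ideal. -/
def minGens (I : Ideal (MvPolynomial (Fin n) k)) : Set (Fin n →₀ ℕ) :=
  {μ | monomial μ (1 : k) ∈ I ∧
    ∀ ν : Fin n →₀ ℕ, monomial ν (1 : k) ∈ I → ν ≤ μ → ν = μ}

/-- `E_i`: the exponent vectors of the minimal generators of `In(I)` involving none of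
the variables `x_{n-i+1}, …, x_n`. -/
def Evar (i : ℕ) (I : Ideal (MvPolynomial (Fin n) k)) : Set (Fin n →₀ ℕ) :=
  {μ ∈ minGens (initialIdeal I) | ∀ j : Fin n, n - i ≤ (j : ℕ) → μ j = 0}

/-- The set `F` of corners of the staircase determined by `E`:
vectors `a = max(v₁,…,v_s) - (1,…,1)` where `v j ∈ E`, the `j`-th coordinate of `v j`
strictly exceeds that of `v h` for `h ≠ j`, and `a ≱ w` for all `w ∈ E`. -/
def corners {s : ℕ} (E : Set (Fin s →₀ ℕ)) : Set (Fin s →₀ ℕ) :=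
  {a | (∃ v : Fin s → (Fin s →₀ ℕ), (∀ j, v j ∈ E) ∧
      (∀ j h : Fin s, h ≠ j → v h j < v j j) ∧
      ∀ l : Fin s, a l + 1 = Finset.univ.sup fun j => v j l) ∧
    ∀ w ∈ E, ¬ w ≤ a}

lemma natW_le_natW {r r' : ℕ} (h : r ≤ r') : natW r ≤ natW r' := by
  simp [natW]
  exact_mod_cast h

lemma degOf_eq_degree {n : ℕ} (a : Fin n →₀ ℕ) : degOf a = a.degree := rfl

lemma degOf_add_single {n : ℕ} (a : Fin n →₀ ℕ) (j : Fin n) :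
    degOf (a + Finsupp.single j 1) = degOf a + 1 := by
  unfold degOf
  rw [Finsupp.sum_add_index' (fun _ => rfl) (fun _ _ _ => rfl),
    Finsupp.sum_single_index rfl]

lemma monomial_homog {n : ℕ} {k : Type*} [Field k] (a : Fin n →₀ ℕ) :
    (monomial a (1 : k)).IsHomogeneous (degOf a) :=
  isHomogeneous_monomial _ (degOf_eq_degree a).symm

lemma homog_support_deg {n : ℕ} {k : Type*} [Field k] {f : MvPolynomial (Fin n) k} {r : ℕ}
    (hf : f.IsHomogeneous r) {μ : Fin n →₀ ℕ} (hμ : μ ∈ f.support) : degOf μ = r := by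
  have := hf (mem_support_iff.mp hμ)
  simp [Finsupp.degree, Finsupp.weight, Finsupp.linearCombination] at this
  exact this


/-- Proposition 4.2: for a monomial ideal `J ⊆ k[x₁,…,x_s]` with minimal
generating lattice set `E` and `J̃` obtained by setting `x_s = 1`, if `J̃/J` has finite
length then `sup { r : (J̃/J)_r ≠ 0 }` equals `-∞` if the corner set `F` is empty and
`max_{a ∈ F} |a|` otherwise. -/
theorem stmt_10 {k : Type*} [Field k] (s : ℕ) (hs : 0 < s) (E : Set (Fin s →₀ ℕ))
    (hmin : ∀ v ∈ E, ∀ w ∈ E, w ≤ v → w = v)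
    (J Jt : Ideal (MvPolynomial (Fin s) k))
    (hJ : J = Ideal.span ((fun v => monomial v (1 : k)) '' E))
    (hJt : Jt = Ideal.span
      ((fun v => monomial (Finsupp.erase (⟨s - 1, by omega⟩ : Fin s) v) (1 : k)) '' E))
    (hfin : sSup {x : WithBot ℕ∞ | ∃ r : ℕ, x = natW r ∧
        ∃ f : MvPolynomial (Fin s) k, f.IsHomogeneous r ∧ f ∈ Jt ∧ f ∉ J} < ⊤) :
    sSup {x : WithBot ℕ∞ | ∃ r : ℕ, x = natW r ∧
        ∃ f : MvPolynomial (Fin s) k, f.IsHomogeneous r ∧ f ∈ Jt ∧ f ∉ J}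
      = sSup {x : WithBot ℕ∞ | ∃ a ∈ corners E, x = natW (degOf a)} := by
    classical
  set last : Fin s := ⟨s - 1, by omega⟩ with hlast
  -- membership criteria
  have memJ : ∀ f : MvPolynomial (Fin s) k,
      f ∈ J ↔ ∀ μ ∈ f.support, ∃ w ∈ E, w ≤ μ := by
    intro f; rw [hJ]; exact mem_ideal_span_monomial_image
  have memJt : ∀ f : MvPolynomial (Fin s) k,
      f ∈ Jt ↔ ∀ μ ∈ f.support, ∃ v ∈ E, Finsupp.erase last v ≤ μ := by
    intro f
    rw [hJt]
    have himg : ((fun v => monomial (Finsupp.erase last v) (1 : k)) '' E)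
        = (fun v => monomial v (1 : k)) '' (Finsupp.erase last '' E) := by
      rw [Set.image_image]
    rw [himg, mem_ideal_span_monomial_image]
    constructor
    · intro h μ hμ
      obtain ⟨w, ⟨v, hv, rfl⟩, hle⟩ := h μ hμ
      exact ⟨v, hv, hle⟩
    · intro h μ hμ
      obtain ⟨v, hv, hle⟩ := h μ hμ
      exact ⟨Finsupp.erase last v, ⟨v, hv, rfl⟩, hle⟩
  have supp_mono : ∀ a : Fin s →₀ ℕ, (monomial a (1 : k)).support = {a} :=
    fun a => by rw [support_monomial, if_neg one_ne_zero]
  have mono_memJ : ∀ a : Fin s →₀ ℕ,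
      monomial a (1 : k) ∈ J ↔ ∃ w ∈ E, w ≤ a := by
    intro a; rw [memJ, supp_mono]; simp
  have mono_memJt : ∀ a : Fin s →₀ ℕ,
      monomial a (1 : k) ∈ Jt ↔ ∃ v ∈ E, Finsupp.erase last v ≤ a := by
    intro a; rw [memJt, supp_mono]; simp
  -- corners give monomials in Jt \ J
  have corner_mem : ∀ a ∈ corners E,
      (∃ v ∈ E, Finsupp.erase last v ≤ a) ∧ ¬ ∃ w ∈ E, w ≤ a := by
    rintro a ⟨⟨v, hvE, hstrict, hsup⟩, hnot⟩
    refine ⟨⟨v last, hvE last, ?_⟩, ?_⟩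
    · rw [Finsupp.le_def]
      intro l
      by_cases hl : l = last
      · subst hl; simp
      · rw [Finsupp.erase_ne hl]
        have h1 : v last l < v l l := hstrict l last (fun h => hl h.symm)
        have h2 : v l l ≤ Finset.univ.sup fun j => v j l :=
          Finset.le_sup (f := fun j => v j l) (Finset.mem_univ l)
        have := hsup l
        omega
    · rintro ⟨w, hw, hle⟩; exact hnot w hw hle
  -- extract degree bound from hfin
  obtain ⟨N, hN⟩ : ∃ N : ℕ, ∀ μ : Fin s →₀ ℕ,
      (∃ v ∈ E, Finsupp.erase last v ≤ μ) → (¬ ∃ w ∈ E, w ≤ μ) → degOf μ ≤ N := by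
    have key : ∀ μ : Fin s →₀ ℕ, (∃ v ∈ E, Finsupp.erase last v ≤ μ) →
        (¬ ∃ w ∈ E, w ≤ μ) →
        natW (degOf μ) ≤ sSup {x : WithBot ℕ∞ | ∃ r : ℕ, x = natW r ∧
          ∃ f : MvPolynomial (Fin s) k, f.IsHomogeneous r ∧ f ∈ Jt ∧ f ∉ J} := by
      intro μ h1 h2
      apply le_sSup
      exact ⟨degOf μ, rfl, monomial μ 1, monomial_homog μ,
        (mono_memJt μ).mpr h1, fun h => h2 ((mono_memJ μ).mp h)⟩
    set b := sSup {x : WithBot ℕ∞ | ∃ r : ℕ, x = natW r ∧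
        ∃ f : MvPolynomial (Fin s) k, f.IsHomogeneous r ∧ f ∈ Jt ∧ f ∉ J} with hb
    match b, hfin with
    | ⊥, _ =>
      refine ⟨0, fun μ h1 h2 => ?_⟩
      have := key μ h1 h2
      rw [le_bot_iff] at this
      exact absurd this (by simp [natW])
    | ((t : ℕ) : ℕ∞), _ =>
      refine ⟨t, fun μ h1 h2 => ?_⟩
      have := key μ h1 h2
      rw [natW] at this
      exact_mod_cast this
    | ((⊤ : ℕ∞) : WithBot ℕ∞), hfin => simp at hfin
  -- climbing to a corner
  have climb : ∀ d : ℕ, ∀ μ : Fin s →₀ ℕ, N + 1 - degOf μ ≤ d →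
      (∃ v ∈ E, Finsupp.erase last v ≤ μ) → (¬ ∃ w ∈ E, w ≤ μ) →
      ∃ a ∈ corners E, degOf μ ≤ degOf a := by
    intro d
    induction d with
    | zero =>
      intro μ hd h1 h2
      have := hN μ h1 h2
      omega
    | succ d ih =>
      intro μ hd h1 h2
      by_cases h : ∀ j : Fin s, ∃ w ∈ E, w ≤ μ + Finsupp.single j 1
      · -- μ is a corner
        have hW : ∀ j : Fin s, ∃ w ∈ E, w j = μ j + 1 ∧ ∀ l, l ≠ j → w l ≤ μ l := by
          intro j
          obtain ⟨w, hw, hle⟩ := h j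
          rw [Finsupp.le_def] at hle
          have hne : ∀ l : Fin s, l ≠ j → w l ≤ μ l := by
            intro l hl
            have := hle l
            rw [Finsupp.add_apply, Finsupp.single_apply, if_neg (Ne.symm hl)] at this
            omega
          have hj : w j ≤ μ j + 1 := by
            have := hle j
            rw [Finsupp.add_apply, Finsupp.single_apply, if_pos rfl] at this
            omega
          have hnle : ¬ w ≤ μ := fun hc => h2 ⟨w, hw, hc⟩
          rw [Finsupp.le_def] at hnle
          push_neg at hnle
          obtain ⟨l, hl⟩ := hnle
          have hlj : l = j := by
            by_contra hc
            exact absurd (hne l hc) (by omega)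
          subst hlj
          exact ⟨w, hw, by omega, hne⟩
        choose W hWE hWj hWne using hW
        refine ⟨μ, ⟨⟨W, hWE, ?_, ?_⟩, fun w hw hle => h2 ⟨w, hw, hle⟩⟩, le_refl _⟩
        · intro j h' hne
          have h1' : W h' j ≤ μ j := hWne h' j (Ne.symm hne)
          have h2' : W j j = μ j + 1 := hWj j
          omega
        · intro l
          apply le_antisymm
          · have : W l l = μ l + 1 := hWj l
            calc μ l + 1 = W l l := this.symm
              _ ≤ Finset.univ.sup fun j => W j l :=
                Finset.le_sup (f := fun j => W j l) (Finset.mem_univ l)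
          · apply Finset.sup_le
            intro j _
            by_cases hjl : j = l
            · subst hjl; have := hWj j; omega
            · have := hWne j l (fun hc => hjl hc.symm)
              omega
      · push_neg at h
        obtain ⟨j, hj⟩ := h
        have h1' : ∃ v ∈ E, Finsupp.erase last v ≤ μ + Finsupp.single j 1 := by
          obtain ⟨v, hv, hle⟩ := h1
          exact ⟨v, hv, le_trans hle (le_add_of_nonneg_right zero_le)⟩
        have h2' : ¬ ∃ w ∈ E, w ≤ μ + Finsupp.single j 1 := by
          rintro ⟨w, hw, hle⟩; exact hj w hw hle
        have hdeg : degOf (μ + Finsupp.single j 1) = degOf μ + 1 := degOf_add_single μ j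
        have hμN : degOf μ ≤ N := hN μ h1 h2
        have hrec : N + 1 - degOf (μ + Finsupp.single j 1) ≤ d := by omega
        obtain ⟨a, ha, hda⟩ := ih (μ + Finsupp.single j 1) hrec h1' h2'
        exact ⟨a, ha, by omega⟩
  apply le_antisymm
  · apply sSup_le
    rintro x ⟨r, rfl, f, hhom, hJtf, hJf⟩
    rw [memJ] at hJf
    push_neg at hJf
    obtain ⟨μ, hμ, hμJ⟩ := hJf
    have hμJ' : ¬ ∃ w ∈ E, w ≤ μ := by rintro ⟨w, hw, hle⟩; exact hμJ w hw hle
    have hμJt : ∃ v ∈ E, Finsupp.erase last v ≤ μ := (memJt f).mp hJtf μ hμ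
    have hdeg : degOf μ = r := homog_support_deg hhom hμ
    obtain ⟨a, ha, hda⟩ := climb (N + 1 - degOf μ) μ (le_refl _) hμJt hμJ'
    calc natW r = natW (degOf μ) := by rw [hdeg]
      _ ≤ natW (degOf a) := natW_le_natW hda
      _ ≤ sSup {x : WithBot ℕ∞ | ∃ a ∈ corners E, x = natW (degOf a)} := by
        have hm : natW (degOf a) ∈ {x : WithBot ℕ∞ | ∃ a ∈ corners E, x = natW (degOf a)} :=
          ⟨a, ha, rfl⟩
        exact le_sSup hm
  · apply sSup_le
    rintro x ⟨a, ha, rfl⟩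
    obtain ⟨h1, h2⟩ := corner_mem a ha
    have hmem : natW (degOf a) ∈ {x : WithBot ℕ∞ | ∃ r : ℕ, x = natW r ∧
        ∃ f : MvPolynomial (Fin s) k, f.IsHomogeneous r ∧ f ∈ Jt ∧ f ∉ J} :=
      ⟨degOf a, rfl, monomial a 1, monomial_homog a,
        (mono_memJt a).mpr h1, fun hm => h2 ((mono_memJ a).mp hm)⟩
    exact le_sSup hmem
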